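/- Let p(z) = Σ_{j=0}^n a_j z^j be a complex polynomial of degree n that is at least a trinomial, and let k be the smallest positive integer with a_{n-k} ≠ 0. Define q_2(z) = (a_n z^{2k} − a_{n-k} z^k + a_{n-k}^2 / a_n) p(z). Then ρ[q_2] ≤ ρ[p]. -/

import Mathlib

open Polynomial Finset

/-- The function whose unique positive root is the Cauchy radius of `q`. -/
noncomputable def cauchyFun (q : Polynomial ℂ) (x : ℝ) : ℝ :=
  ‖q.leadingCoeff‖ * x ^ q.natDegree
    - ∑ j ∈ Finset.range q.natDegree, ‖q.coeff j‖ * x ^ j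

lemma cauchy_mono (q : Polynomial ℂ) (hq : q.leadingCoeff ≠ 0)
    (x y : ℝ) (hx : 0 < x) (hy : 0 < y)
    (h0 : cauchyFun q x = 0) (h1 : 0 ≤ cauchyFun q y) : x ≤ y := by
  by_contra hcon
  push_neg at hcon
  set N := q.natDegree with hN
  have habs : (0:ℝ) < ‖q.leadingCoeff‖ := by
    simpa [norm_pos_iff] using hq
  have hS : ‖q.leadingCoeff‖ * x ^ N
      = ∑ j ∈ range N, ‖q.coeff j‖ * x ^ j := by
    have := h0; unfold cauchyFun at this; linarith
  have hSpos : 0 < ∑ j ∈ range N, ‖q.coeff j‖ * x ^ j := by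
    rw [← hS]; positivity
  obtain ⟨j0, hj0mem, hj0pos⟩ : ∃ j ∈ range N, 0 < ‖q.coeff j‖ * x ^ j := by
    by_contra h; push_neg at h
    have : ∑ j ∈ range N, ‖q.coeff j‖ * x ^ j ≤ 0 :=
      Finset.sum_nonpos (fun j hj => h j hj)
    linarith
  set t := y / x with ht
  have ht0 : 0 < t := div_pos hy hx
  have ht1 : t < 1 := (div_lt_one hx).mpr hcon
  have hy_eq : ∀ j : ℕ, y ^ j = x ^ j * t ^ j := by
    intro j
    rw [ht, div_pow, mul_div_cancel₀]
    positivity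
  have key : ‖q.leadingCoeff‖ * y ^ N
      < ∑ j ∈ range N, ‖q.coeff j‖ * y ^ j := by
    calc ‖q.leadingCoeff‖ * y ^ N
        = (‖q.leadingCoeff‖ * x ^ N) * t ^ N := by rw [hy_eq]; ring
      _ = ∑ j ∈ range N, ‖q.coeff j‖ * x ^ j * t ^ N := by
          rw [hS, Finset.sum_mul]
      _ < ∑ j ∈ range N, ‖q.coeff j‖ * x ^ j * t ^ j := by
          apply Finset.sum_lt_sum
          · intro j hj
            have : t ^ N ≤ t ^ j :=
              pow_le_pow_of_le_one ht0.le ht1.le (le_of_lt (mem_range.mp hj))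
            have h0' : 0 ≤ ‖q.coeff j‖ * x ^ j := by positivity
            exact mul_le_mul_of_nonneg_left this h0'
          · refine ⟨j0, hj0mem, ?_⟩
            have : t ^ N < t ^ j0 :=
              pow_lt_pow_right_of_lt_one₀ ht0 ht1 (mem_range.mp hj0mem)
            exact mul_lt_mul_of_pos_left this hj0pos
      _ = ∑ j ∈ range N, ‖q.coeff j‖ * y ^ j := by
          refine Finset.sum_congr rfl fun j hj => ?_
          rw [hy_eq]; ring
  have : cauchyFun q y < 0 := by unfold cauchyFun; rw [← hN]; linarith
  linarith

lemma cauchy_key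
    (p : Polynomial ℂ) (n : ℕ) (hp : p ≠ 0) (hn : p.natDegree = n)
    (k ℓ : ℕ) (hk : 0 < k) (hℓ : 0 < ℓ) (hkl : k + ℓ ≤ n)
    (y : ℝ) (hy : 0 < y)
    (hyroot : cauchyFun p y = 0) :
    ((C (p.coeff n) * X ^ (2 * k) - C (p.coeff (n - k)) * X ^ k
          + C (p.coeff (n - k) ^ 2 / p.coeff n)) * p).leadingCoeff ≠ 0 ∧
    0 ≤ cauchyFun ((C (p.coeff n) * X ^ (2 * k) - C (p.coeff (n - k)) * X ^ k
          + C (p.coeff (n - k) ^ 2 / p.coeff n)) * p) y := by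
  set a := p.coeff n with ha
  set b := p.coeff (n - k) with hb
  have hkn : k ≤ n := le_trans (Nat.le_add_right k ℓ) hkl
  have hn0 : 0 < n := lt_of_lt_of_le (by omega) hkl
  have ha0 : a ≠ 0 := by
    rw [ha, ← hn]
    exact mt leadingCoeff_eq_zero.mp hp
  set g := C a * X ^ (2*k) - C b * X ^ k + C (b^2/a) with hg
  set q := g * p with hq
  have hgc : g.coeff (2*k) = a := by
    have h1 : ¬ (2*k = k) := by omega
    have h2 : ¬ (2*k = 0) := by omega
    simp [hg, coeff_C, coeff_X_pow, h1, h2]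
  have hgle : g.natDegree ≤ 2*k := by
    refine le_trans (natDegree_add_le _ _) (max_le (le_trans (natDegree_sub_le _ _) ?_) ?_)
    · exact max_le (natDegree_C_mul_X_pow_le a (2*k))
        (le_trans (natDegree_C_mul_X_pow_le b k) (by omega))
    · simp [natDegree_C]
  have hg0 : g ≠ 0 := fun h => ha0 (by rw [← hgc, h, coeff_zero])
  have hgdeg : g.natDegree = 2*k :=
    le_antisymm hgle (le_natDegree_of_ne_zero (hgc ▸ ha0))
  have hqdeg : q.natDegree = 2*k + n := by
    rw [hq, natDegree_mul hg0 hp, hgdeg, hn]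
  have hplead : p.leadingCoeff = a := by rw [leadingCoeff, hn]
  have hqlead : q.leadingCoeff = a * a := by
    rw [hq, leadingCoeff_mul, hplead, leadingCoeff, hgdeg, hgc]
  refine ⟨by rw [hqlead]; exact mul_ne_zero ha0 ha0, ?_⟩
  have hqc : ∀ m, q.coeff m =
      (if 2*k ≤ m then a * p.coeff (m - 2*k) else 0)
      - (if k ≤ m then b * p.coeff (m - k) else 0)
      + (b^2/a) * p.coeff m := by
    intro m
    have hrw : q = (C a * p) * X^(2*k) - (C b * p) * X^k + C (b^2/a) * p := by
      rw [hq, hg]; ring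
    rw [hrw]
    simp [coeff_mul_X_pow', coeff_C_mul, apply_ite (norm : ℂ → ℝ)]
  have hpz : ∀ i, n < i → p.coeff i = 0 := fun i hi =>
    coeff_eq_zero_of_natDegree_lt (hn ▸ hi)
  set S := ∑ i ∈ range n, ‖p.coeff i‖ * y ^ i with hSdef
  have hyS : S = ‖a‖ * y ^ n := by
    have := hyroot; unfold cauchyFun at this
    rw [hplead, hn] at this; linarith
  set A1 := ‖a‖ with hA1
  set B1 := ‖b‖ with hB1
  have hA1pos : 0 < A1 := by simpa [hA1, norm_pos_iff] using ha0
  -- termwise bound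
  have term : ∀ m ∈ range (2*k+n),
      ‖q.coeff m‖ * y ^ m ≤
        A1 * y^(2*k) * (if 2*k ≤ m ∧ m ≠ n + k then ‖p.coeff (m-2*k)‖ * y^(m-2*k) else 0)
        + B1 * y^k * (if k ≤ m ∧ m ≠ n ∧ m ≠ n+k then ‖p.coeff (m-k)‖ * y^(m-k) else 0)
        + B1^2/A1 * (if m ≠ n then ‖p.coeff m‖ * y^m else 0) := by
    intro m hm
    rcases eq_or_ne m (n+k) with rfl | hm1
    · have e1 : n + k - 2*k = n - k := by omega
      have e2 : n + k - k = n := by omega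
      have e3 : (2*k ≤ n + k) := by omega
      have e4 : (k ≤ n + k) := by omega
      have e5 : p.coeff (n + k) = 0 := hpz _ (by omega)
      have e6 : ¬ (n + k = n) := by omega
      rw [hqc]
      simp only [e1, e2, if_pos e3, if_pos e4, e5, if_neg e6]
      have : a * b - b * p.coeff n + b ^ 2 / a * 0 = 0 := by rw [← ha]; ring
      rw [this]
      simp
    rcases eq_or_ne m n with hm2 | hm2
    · rw [hqc]
      have c1 : k ≤ m := by omega
      have hco : p.coeff (m - k) = b := by rw [hm2]
      have hcn : p.coeff m = a := by rw [hm2]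
      have hterm : (if 2*k ≤ m then a * p.coeff (m - 2*k) else 0)
          - (if k ≤ m then b * p.coeff (m - k) else 0) + (b^2/a) * p.coeff m
          = (if 2*k ≤ m then a * p.coeff (m - 2*k) else 0) := by
        rw [if_pos c1, hco, hcn, div_mul_cancel₀ _ ha0]
        ring
      rw [hterm]
      have cB : ¬ (k ≤ m ∧ m ≠ n ∧ m ≠ n+k) := fun h => h.2.1 hm2
      have cC : ¬ (m ≠ n) := fun h => h hm2
      have cA : (2*k ≤ m ∧ m ≠ n + k) ↔ (2*k ≤ m) := and_iff_left (by omega)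
      rw [if_neg cB, if_neg cC, if_congr cA rfl rfl]
      simp only [mul_zero, add_zero]
      split_ifs with h1
      · rw [norm_mul]
        have : y ^ m = y^(2*k) * y^(m-2*k) := by rw [← pow_add]; congr 1; omega
        rw [this]; apply le_of_eq; ring
      · simp
    · -- generic m
      rw [hqc]
      set X1 := (if 2*k ≤ m then a * p.coeff (m - 2*k) else 0) with hX1
      set Y1 := (if k ≤ m then b * p.coeff (m - k) else 0) with hY1
      set Z1 := (b^2/a) * p.coeff m with hZ1
      have tri : ‖X1 - Y1 + Z1‖
          ≤ ‖X1‖ + ‖Y1‖ + ‖Z1‖ :=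
        le_trans (norm_add_le _ _)
          (add_le_add_left (norm_sub_le _ _) _)
      have hym : (0:ℝ) ≤ y ^ m := by positivity
      have bd1 : ‖X1‖ * y ^ m ≤
          A1 * y^(2*k) * (if 2*k ≤ m ∧ m ≠ n + k then ‖p.coeff (m-2*k)‖ * y^(m-2*k) else 0) := by
        rw [hX1, if_congr (and_iff_left hm1) rfl rfl]
        split_ifs with h1
        · rw [norm_mul]
          have : y ^ m = y^(2*k) * y^(m-2*k) := by rw [← pow_add]; congr 1; omega
          rw [this, hA1]; apply le_of_eq; ring
        · simp
      have bd2 : ‖Y1‖ * y ^ m ≤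
          B1 * y^k * (if k ≤ m ∧ m ≠ n ∧ m ≠ n+k then ‖p.coeff (m-k)‖ * y^(m-k) else 0) := by
        rw [hY1, if_congr (and_iff_left ⟨hm2, hm1⟩) rfl rfl]
        split_ifs with h1
        · rw [norm_mul]
          have : y ^ m = y^k * y^(m-k) := by rw [← pow_add]; congr 1; omega
          rw [this, hB1]; apply le_of_eq; ring
        · simp
      have bd3 : ‖Z1‖ * y ^ m ≤
          B1^2/A1 * (if m ≠ n then ‖p.coeff m‖ * y^m else 0) := by
        rw [hZ1, if_pos hm2, norm_mul, norm_div, norm_pow]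
        rw [← hA1, ← hB1]; ring_nf; exact le_refl _
      calc ‖X1 - Y1 + Z1‖ * y ^ m
          ≤ (‖X1‖ + ‖Y1‖ + ‖Z1‖) * y ^ m :=
            mul_le_mul_of_nonneg_right tri hym
        _ = ‖X1‖ * y^m + ‖Y1‖ * y^m + ‖Z1‖ * y^m := by ring
        _ ≤ _ := by linarith
  -- Sum of A-terms
  have hmemnk : n - k ∈ range n := mem_range.mpr (by omega)
  have hsub1 : ∀ (c : ℕ), c = n - k →
      ∑ i ∈ range n, (if i = c then 0 else ‖p.coeff i‖ * y^i)
        = S - B1 * y^(n-k) := by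
    intro c hc
    have h1 : ∀ i ∈ range n, (if i = c then 0 else ‖p.coeff i‖ * y^i)
        = ‖p.coeff i‖ * y^i
          - (if i = c then ‖p.coeff c‖ * y^c else 0) := by
      intro i _
      split_ifs with h
      · rw [h]; ring
      · ring
    rw [Finset.sum_congr rfl h1, Finset.sum_sub_distrib,
      Finset.sum_ite_eq' (range n) c (fun _ => ‖p.coeff c‖ * y^c),
      if_pos (hc ▸ hmemnk), hc]
  have hAsum : ∑ m ∈ range (2*k+n),
      (if 2*k ≤ m ∧ m ≠ n + k then ‖p.coeff (m-2*k)‖ * y^(m-2*k) else 0)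
      = S - B1 * y^(n-k) := by
    rw [Finset.sum_range_add]
    have h1 : ∑ m ∈ range (2*k),
        (if 2*k ≤ m ∧ m ≠ n + k then ‖p.coeff (m-2*k)‖ * y^(m-2*k) else 0) = 0 :=
      Finset.sum_eq_zero fun m hm => by
        have := mem_range.mp hm
        rw [if_neg]; intro h; omega
    have h2 : ∀ i ∈ range n,
        (if 2*k ≤ 2*k + i ∧ 2*k + i ≠ n + k then
          ‖p.coeff (2*k + i - 2*k)‖ * y^(2*k + i - 2*k) else 0)
        = (if i = n - k then 0 else ‖p.coeff i‖ * y^i) := by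
      intro i hi
      have e : 2*k + i - 2*k = i := by omega
      rw [e]
      by_cases hc : i = n - k
      · rw [if_neg (by omega), if_pos hc]
      · rw [if_pos ⟨by omega, by omega⟩, if_neg hc]
    rw [h1, zero_add, Finset.sum_congr rfl h2, hsub1 (n-k) rfl]
  -- Sum of B-terms
  have hBsum : ∑ m ∈ range (2*k+n),
      (if k ≤ m ∧ m ≠ n ∧ m ≠ n+k then ‖p.coeff (m-k)‖ * y^(m-k) else 0)
      = S - B1 * y^(n-k) := by
    have hridx : 2*k+n = k + (k+n) := by omega
    rw [hridx, Finset.sum_range_add]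
    have h1 : ∑ m ∈ range k,
        (if k ≤ m ∧ m ≠ n ∧ m ≠ n+k then ‖p.coeff (m-k)‖ * y^(m-k) else 0) = 0 :=
      Finset.sum_eq_zero fun m hm => by
        have := mem_range.mp hm
        rw [if_neg]; intro h; omega
    have h2 : ∀ i ∈ range (k+n),
        (if k ≤ k + i ∧ k + i ≠ n ∧ k + i ≠ n+k then
          ‖p.coeff (k + i - k)‖ * y^(k + i - k) else 0)
        = (if i = n - k ∨ n ≤ i then 0 else ‖p.coeff i‖ * y^i) := by
      intro i hi
      have e : k + i - k = i := by omega
      rw [e]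
      by_cases hc : i = n - k ∨ n ≤ i
      · rw [if_pos hc]
        rcases hc with hc | hc
        · rw [if_neg (by omega)]
        · rcases eq_or_lt_of_le hc with hc2 | hc2
          · rw [if_neg (by omega)]
          · rw [hpz i hc2]
            simp
      · have hc' := hc; push_neg at hc'
        rw [if_pos ⟨by omega, by omega, by omega⟩, if_neg hc]
    rw [h1, zero_add, Finset.sum_congr rfl h2]
    have h3 : ∑ i ∈ range (k+n),
        (if i = n - k ∨ n ≤ i then 0 else ‖p.coeff i‖ * y^i)
        = ∑ i ∈ range n, (if i = n - k then 0 else ‖p.coeff i‖ * y^i) := by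
      rw [← Finset.sum_subset (Finset.range_subset_range.mpr (by omega : n ≤ k + n))]
      · exact Finset.sum_congr rfl fun i hi => by
          have := mem_range.mp hi
          by_cases hc : i = n - k
          · rw [if_pos (Or.inl hc), if_pos hc]
          · rw [if_neg (by omega), if_neg hc]
      · intro i hi hni
        have h4 := mem_range.mp hi
        have h5 : n ≤ i := by simpa using hni
        rw [if_pos (Or.inr h5)]
    rw [h3, hsub1 (n-k) rfl]
  -- Sum of C-terms
  have hCsum : ∑ m ∈ range (2*k+n),
      (if m ≠ n then ‖p.coeff m‖ * y^m else 0) = S := by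
    rw [← Finset.sum_subset (Finset.range_subset_range.mpr (by omega : n ≤ 2*k + n))]
    · exact Finset.sum_congr rfl fun i hi => by
        have := mem_range.mp hi
        rw [if_pos (by omega)]
    · intro i hi hni
      have h5 : n ≤ i := by simpa using hni
      rcases eq_or_lt_of_le h5 with h6 | h6
      · rw [if_neg (by omega)]
      · rw [if_pos (by omega), hpz i h6]
        simp
  -- put it all together
  have hsum : ∑ m ∈ range (2*k+n), ‖q.coeff m‖ * y ^ m
      ≤ ‖a*a‖ * y^(2*k+n) := by
    calc ∑ m ∈ range (2*k+n), ‖q.coeff m‖ * y ^ m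
        ≤ ∑ m ∈ range (2*k+n),
          (A1 * y^(2*k) * (if 2*k ≤ m ∧ m ≠ n + k then ‖p.coeff (m-2*k)‖ * y^(m-2*k) else 0)
          + B1 * y^k * (if k ≤ m ∧ m ≠ n ∧ m ≠ n+k then ‖p.coeff (m-k)‖ * y^(m-k) else 0)
          + B1^2/A1 * (if m ≠ n then ‖p.coeff m‖ * y^m else 0)) :=
          Finset.sum_le_sum term
      _ = A1 * y^(2*k) * (S - B1*y^(n-k)) + B1 * y^k * (S - B1*y^(n-k)) + B1^2/A1 * S := by
          rw [Finset.sum_add_distrib, Finset.sum_add_distrib, ← Finset.mul_sum,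
            ← Finset.mul_sum, ← Finset.mul_sum, hAsum, hBsum, hCsum]
      _ = ‖a*a‖ * y^(2*k+n) := by
          rw [norm_mul, ← hA1, hyS]
          have e1 : y ^ n = y^k * y^(n-k) := by rw [← pow_add]; congr 1; omega
          have e2 : y ^ (2*k) = y^k * y^k := by rw [← pow_add]; congr 1; omega
          have e3 : y ^ (2*k+n) = y^k * y^k * y^n := by
            rw [mul_assoc, ← pow_add, ← pow_add]; congr 1; omega
          have e4 : B1^2/A1 * (A1 * y^n) = B1^2 * y^n := by
            field_simp
          rw [e4, e3, e2, e1]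
          ring
  unfold cauchyFun
  rw [hqdeg, hqlead]
  linarith

/-- For the multiplier `aₙ z^{2k} - a_{n-k} z^k + a_{n-k}²/aₙ`,
the Cauchy radius of `q₂` is at most that of `p`. -/
theorem improved_cauchy_radius_q2
    (p : Polynomial ℂ) (n : ℕ) (hp : p ≠ 0) (hn : p.natDegree = n)
    (k ℓ : ℕ) (hk : 0 < k) (hℓ : 0 < ℓ) (hkl : k + ℓ ≤ n)
    (hknz : p.coeff (n - k) ≠ 0)
    (hkmin : ∀ j, 0 < j → j < k → p.coeff (n - j) = 0)
    (hlnz : p.coeff (n - k - ℓ) ≠ 0)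
    (hlmin : ∀ j, 0 < j → j < ℓ → p.coeff (n - k - j) = 0)
    (x y : ℝ) (hx : 0 < x) (hy : 0 < y)
    (hxroot : cauchyFun
      ((C (p.coeff n) * X ^ (2 * k) - C (p.coeff (n - k)) * X ^ k
          + C (p.coeff (n - k) ^ 2 / p.coeff n)) * p) x = 0)
    (hyroot : cauchyFun p y = 0) :
    x ≤ y := by
  obtain ⟨h1, h2⟩ := cauchy_key p n hp hn k ℓ hk hℓ hkl y hy hyroot
  exact cauchy_mono _ h1 x y hx hy hxroot h2
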